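/- With p_j = p_j^min = (1 − 2^{(a_j−R_j)/B})(Q + σ²/h_j) for j ≠ k and p_k = Q − ∑_{j≠k} p_j^min, the index k maximizing the resulting sum-rate is k = argmin_{j} 2^{(a_j−R_j)/B}·(Q + σ²/h_j); equivalently, argmax_j (P−p_0−∑_i p_i^min)/(∑_i p_i^min + σ²/h_j − p_j^min) = argmin_j (σ²/h_j − p_j^min). -/

import Mathlib

open Real Finset

/-- Minimum private power of user `j` (eq. (14)). -/
noncomputable def pmin (Q σ2 B : ℝ) (h a R : ℕ → ℝ) (j : ℕ) : ℝ :=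
  (1 - (2:ℝ) ^ ((a j - R j) / B)) * (Q + σ2 / h j)

/-- Sum of private rates when all the slack power is given to user `m`
and every other user gets its minimum power (eq. (D.1)). -/
noncomputable def slackRate (K : ℕ) (Q σ2 B : ℝ) (h a R : ℕ → ℝ) (m : ℕ) : ℝ :=
  (∑ j ∈ (Finset.range K).erase m,
      B * Real.logb 2 ((h j * Q + σ2) / (h j * (Q - pmin Q σ2 B h a R j) + σ2)))
    + B * Real.logb 2 ((h m * Q + σ2) /
        (h m * ∑ j ∈ (Finset.range K).erase m, pmin Q σ2 B h a R j + σ2))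

lemma logdiff_le_iff {D x y : ℝ} (hD : 0 < D) (hx : D < x) (hy : D < y) :
    Real.logb 2 x - Real.logb 2 (x - D) ≤ Real.logb 2 y - Real.logb 2 (y - D) ↔ y ≤ x := by
  have hx0 : 0 < x := hD.trans hx
  have hy0 : 0 < y := hD.trans hy
  have hxD : 0 < x - D := by linarith
  have hyD : 0 < y - D := by linarith
  rw [sub_le_sub_iff, ← Real.logb_mul hx0.ne' hyD.ne', ← Real.logb_mul hy0.ne' hxD.ne',
      Real.logb_le_logb one_lt_two (by positivity) (by positivity)]
  constructor <;> intro hle <;> nlinarith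

/-- Theorem 2: the user `k` receiving the slack power maximizes the
sum-rate iff it minimizes `2^{(aⱼ−Rⱼ)/B}(Q + σ²/hⱼ)` (equivalently, minimizes
`σ²/hⱼ − pminⱼ`). -/
theorem stmt_8 (K : ℕ) (Q σ2 B : ℝ) (hQ : 0 < Q) (hσ2 : 0 < σ2) (hB : 0 < B)
    (h a R : ℕ → ℝ) (hpos : ∀ j ∈ Finset.range K, 0 < h j)
    (ha : ∀ j ∈ Finset.range K, 0 ≤ a j) (haR : ∀ j ∈ Finset.range K, a j ≤ R j)
    (hfeas : ∑ j ∈ Finset.range K, pmin Q σ2 B h a R j < Q)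
    (k : ℕ) (hk : k ∈ Finset.range K) :
    (∀ m ∈ Finset.range K,
        slackRate K Q σ2 B h a R m ≤ slackRate K Q σ2 B h a R k) ↔
      (∀ m ∈ Finset.range K,
        (2:ℝ) ^ ((a k - R k) / B) * (Q + σ2 / h k) ≤
          (2:ℝ) ^ ((a m - R m) / B) * (Q + σ2 / h m)) := by
  set c : ℕ → ℝ := fun j => (2:ℝ) ^ ((a j - R j) / B) * (Q + σ2 / h j) with hcdef
  set S : ℝ := ∑ j ∈ Finset.range K, pmin Q σ2 B h a R j with hSdef
  have hD : 0 < Q - S := by linarith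
  -- basic facts per index
  have hepos : ∀ j, (0:ℝ) < (2:ℝ) ^ ((a j - R j) / B) := fun j =>
    Real.rpow_pos_of_pos two_pos _
  have hele : ∀ j ∈ Finset.range K, (2:ℝ) ^ ((a j - R j) / B) ≤ 1 := by
    intro j hj
    apply Real.rpow_le_one_of_one_le_of_nonpos (by norm_num)
    exact div_nonpos_of_nonpos_of_nonneg (by linarith [haR j hj]) hB.le
  have hQσ : ∀ j ∈ Finset.range K, 0 < Q + σ2 / h j := by
    intro j hj
    have := hpos j hj
    positivity
  have hcpos : ∀ j ∈ Finset.range K, 0 < c j := by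
    intro j hj
    have := hQσ j hj
    simp only [hcdef]
    positivity
  have hpmin_nonneg : ∀ j ∈ Finset.range K, 0 ≤ pmin Q σ2 B h a R j := by
    intro j hj
    have h1 := hele j hj
    have h2 := hQσ j hj
    unfold pmin
    nlinarith
  -- c j - (Q - S) > 0 : equals σ2/h j + ∑_{erase j} pmin
  have hcD : ∀ m ∈ Finset.range K, Q - S < c m := by
    intro m hm
    have hhm := hpos m hm
    have hsum : 0 ≤ ∑ j ∈ (Finset.range K).erase m, pmin Q σ2 B h a R j :=
      Finset.sum_nonneg fun j hj => hpmin_nonneg j (Finset.mem_of_mem_erase hj)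
    have herase : ∑ j ∈ (Finset.range K).erase m, pmin Q σ2 B h a R j
        = S - pmin Q σ2 B h a R m := by
      rw [hSdef, Finset.sum_erase_eq_sub hm]
    have hcm : c m = Q + σ2 / h m - pmin Q σ2 B h a R m := by
      simp only [hcdef]; unfold pmin; ring
    have hσh : 0 < σ2 / h m := by positivity
    nlinarith [herase ▸ hsum]
  -- rewrite slackRate
  have key : ∀ m ∈ Finset.range K,
      slackRate K Q σ2 B h a R m =
        (∑ j ∈ Finset.range K,
          B * Real.logb 2 ((h j * Q + σ2) / (h j * (Q - pmin Q σ2 B h a R j) + σ2)))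
        + B * (Real.logb 2 (c m) - Real.logb 2 (c m - (Q - S))) := by
    intro m hm
    have hhm := hpos m hm
    have hcm := hcpos m hm
    have hcDm := hcD m hm
    have hA : 0 < h m * Q + σ2 := by positivity
    -- denominators
    have hden1 : h m * (Q - pmin Q σ2 B h a R m) + σ2 = h m * c m := by
      simp only [hcdef]; unfold pmin; field_simp; ring
    have herase : ∑ j ∈ (Finset.range K).erase m, pmin Q σ2 B h a R j
        = S - pmin Q σ2 B h a R m := by
      rw [hSdef, Finset.sum_erase_eq_sub hm]
    have hden2 : h m * (∑ j ∈ (Finset.range K).erase m, pmin Q σ2 B h a R j) + σ2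
        = h m * (c m - (Q - S)) := by
      rw [herase]; simp only [hcdef]; unfold pmin; field_simp; ring
    have hsplit : ∑ j ∈ (Finset.range K).erase m,
        B * Real.logb 2 ((h j * Q + σ2) / (h j * (Q - pmin Q σ2 B h a R j) + σ2))
        = (∑ j ∈ Finset.range K,
          B * Real.logb 2 ((h j * Q + σ2) / (h j * (Q - pmin Q σ2 B h a R j) + σ2)))
          - B * Real.logb 2 ((h m * Q + σ2) / (h m * (Q - pmin Q σ2 B h a R m) + σ2)) :=
      Finset.sum_erase_eq_sub hm
    unfold slackRate
    rw [hsplit, hden1, hden2]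
    have hcmD : 0 < c m - (Q - S) := by linarith
    rw [Real.logb_div hA.ne' (by positivity), Real.logb_div hA.ne' (by positivity),
        Real.logb_mul hhm.ne' hcm.ne', Real.logb_mul hhm.ne' hcmD.ne']
    ring
  -- pointwise equivalence
  have hiff : ∀ m ∈ Finset.range K,
      (slackRate K Q σ2 B h a R m ≤ slackRate K Q σ2 B h a R k ↔ c k ≤ c m) := by
    intro m hm
    rw [key m hm, key k hk, add_le_add_iff_left, mul_le_mul_iff_right₀ hB,
        logdiff_le_iff hD (hcD m hm) (hcD k hk)]
  exact forall₂_congr hiff
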